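/- For every real x with 0 < x ≤ π/4, one has 1 + 1/x² − (csc x)² ≥ 0, i.e. sin²x · (1 + 1/x²) ≥ 1. -/

import Mathlib

open Real

theorem stmt_1 (x : ℝ) (hx0 : 0 < x) (hx : x ≤ π / 4) :
    Real.sin x ^ 2 * (1 + 1 / x ^ 2) ≥ 1 := by
  have h1 : x ≤ 1 := by nlinarith [Real.pi_lt_d2]
  have hs : x - x ^ 3 / 4 < Real.sin x := by
    have := Real.sin_gt_sub_cube hx0; nlinarith [pow_pos hx0 3]
  have hpos : 0 < x - x ^ 3 / 4 := by nlinarith [mul_pos (mul_pos hx0 hx0) hx0]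
  have h2 : (0:ℝ) < x ^ 2 := by positivity
  have hsq : Real.sin x ^ 2 ≥ (x - x ^ 3 / 4) ^ 2 := by nlinarith
  have hx2 : x ^ 2 ≤ 1 := by nlinarith
  have haux : (x - x ^ 3 / 4) ^ 2 * (x ^ 2 + 1) - x ^ 2 ≥ 0 := by
    nlinarith [mul_nonneg (mul_nonneg (sq_nonneg x) (sq_nonneg x))
      (by nlinarith : (0:ℝ) ≤ 8 - 7 * x ^ 2 + x ^ 4)]
  have h3 : (x - x ^ 3 / 4) ^ 2 * (x ^ 2 + 1) ≤ Real.sin x ^ 2 * (x ^ 2 + 1) :=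
    mul_le_mul_of_nonneg_right hsq (by positivity)
  have key : Real.sin x ^ 2 * (x ^ 2 + 1) - x ^ 2 ≥ 0 := by linarith
  rw [ge_iff_le, ← sub_nonneg]
  have heq : Real.sin x ^ 2 * (1 + 1 / x ^ 2) - 1
      = (Real.sin x ^ 2 * (x ^ 2 + 1) - x ^ 2) / x ^ 2 := by
    field_simp
  rw [heq]
  exact div_nonneg key h2.le
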